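/- Let ψ : [0,∞) → (0,∞) be continuous, nondecreasing on [1,∞), constant on [0,1], with ψ(s) ≍ s^{1+p} for large s, and let 0 < α < 1, C > 0, M ≥ C, t ∈ (1/2,1) with (1+p)t < 1. Define g(x) = exp(−((1−α)/(2M)) ∫₀ˣ ψ(s)^{−t} ds) and σ_j = g(j)/(M ψ(j)^t). Then for every m ∈ ℕ, (C ψ(m)^t − 1) σ_m < ((1−α)/2) ∑_{j=m+1}^∞ σ_j. -/

import Mathlib

open Real Set

set_option maxHeartbeats 2000000 in
theorem stmt_10 (ψ : ℝ → ℝ)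
    (hψc : ContinuousOn ψ (Set.Ici 0))
    (hψpos : ∀ s ≥ (0:ℝ), 0 < ψ s)
    (hmono : MonotoneOn ψ (Set.Ici 1))
    (hconst : ∀ s : ℝ, 0 ≤ s → s ≤ 1 → ψ s = ψ 1)
    (p N A₂ A₃ : ℝ) (hp : 0 < p) (hN : 0 < N) (hA₂ : 0 < A₂) (hA₃ : 0 < A₃)
    (hcomp : ∀ s ≥ N, A₃ * s ^ (1 + p) ≤ ψ s ∧ ψ s ≤ A₂ * s ^ (1 + p))
    (α C M t : ℝ) (hα : 0 < α) (hα1 : α < 1) (hC : 0 < C) (hMC : C ≤ M)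
    (ht : 1 / 2 < t) (ht1 : t < 1) (hpt : (1 + p) * t < 1)
    (g : ℝ → ℝ)
    (hg : ∀ x, g x = Real.exp (-((1 - α) / (2 * M) * ∫ s in (0:ℝ)..x, (ψ s) ^ (-t))))
    (σ : ℕ → ℝ) (hσ : ∀ j : ℕ, σ j = g j / (M * (ψ j) ^ t)) :
    ∀ m : ℕ, 1 ≤ m →
      (C * (ψ m) ^ t - 1) * σ m < (1 - α) / 2 * ∑' j : ℕ, σ (m + 1 + j) := by
  have hM : 0 < M := lt_of_lt_of_le hC hMC
  have htpos : 0 < t := by linarith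
  set c : ℝ := (1 - α) / (2 * M) with hc
  have hcpos : 0 < c := div_pos (by linarith) (by linarith)
  set f : ℝ → ℝ := fun s => ψ s ^ (-t) with hfdef
  have hfpos : ∀ s : ℝ, 0 ≤ s → 0 < f s := fun s hs => Real.rpow_pos_of_pos (hψpos s hs) _
  have hfc : ContinuousOn f (Ici 0) :=
    hψc.rpow_const (fun x hx => Or.inl (ne_of_gt (hψpos x hx)))
  have hsub : ∀ a b : ℝ, 0 ≤ a → 0 ≤ b → Set.uIcc a b ⊆ Ici (0:ℝ) := by
    intro a b ha hb x hx
    exact le_trans (le_inf ha hb) hx.1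
  have hint : ∀ a b : ℝ, 0 ≤ a → 0 ≤ b → IntervalIntegrable f MeasureTheory.volume a b :=
    fun a b ha hb => (hfc.mono (hsub a b ha hb)).intervalIntegrable
  set I : ℝ → ℝ := fun x => ∫ s in (0:ℝ)..x, f s with hIdef
  have hgI : ∀ x : ℝ, g x = Real.exp (-(c * I x)) := fun x => hg x
  have hgpos : ∀ x : ℝ, 0 < g x := fun x => by rw [hgI]; exact Real.exp_pos _
  have hIadd : ∀ a : ℝ, 0 ≤ a → I (a + 1) = I a + ∫ s in a..(a+1), f s := by
    intro a ha
    exact (intervalIntegral.integral_add_adjacent_intervals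
      (hint 0 a le_rfl ha) (hint a (a+1) ha (by linarith))).symm
  -- antitonicity of f on [1, ∞)
  have hfanti : ∀ a b : ℝ, 1 ≤ a → a ≤ b → f b ≤ f a := by
    intro a b ha hab
    exact Real.rpow_le_rpow_of_nonpos (hψpos a (by linarith))
      (hmono ha (le_trans ha hab) hab) (by linarith)
  -- bounds on ∫ a..a+1 f
  have hΔub : ∀ a : ℝ, 1 ≤ a → (∫ s in a..(a+1), f s) ≤ f a := by
    intro a ha
    have h1 : (∫ s in a..(a+1), f s) ≤ ∫ _s in a..(a+1), f a :=
      intervalIntegral.integral_mono_on (by linarith) (hint a (a+1) (by linarith) (by linarith))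
        intervalIntegrable_const (fun x hx => hfanti a x ha hx.1)
    simpa using h1
  have hΔlb : ∀ a : ℝ, 1 ≤ a → f (a+1) ≤ ∫ s in a..(a+1), f s := by
    intro a ha
    have h1 : (∫ _s in a..(a+1), f (a+1)) ≤ ∫ s in a..(a+1), f s :=
      intervalIntegral.integral_mono_on (by linarith) intervalIntegrable_const
        (hint a (a+1) (by linarith) (by linarith))
        (fun x hx => hfanti x (a+1) (le_trans ha hx.1) hx.2)
    simpa using h1
  -- key step inequalities on reals
  have step : ∀ a : ℝ, 1 ≤ a →
      c * f (a+1) * g (a+1) ≤ g a - g (a+1) ∧ g a - g (a+1) ≤ c * f a * g a := by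
    intro a ha
    set Δ : ℝ := ∫ s in a..(a+1), f s with hΔdef
    have hIa1 : I (a+1) = I a + Δ := hIadd a (by linarith)
    have hΔpos : 0 < Δ := lt_of_lt_of_le (hfpos (a+1) (by linarith)) (hΔlb a ha)
    have hga : g a = Real.exp (-(c * I a)) := hgI a
    have hga1 : g (a+1) = Real.exp (-(c * I a)) * Real.exp (-(c * Δ)) := by
      rw [hgI (a+1), hIa1, ← Real.exp_add]
      congr 1
      ring
    set u : ℝ := Real.exp (-(c * I a)) with hu
    set v : ℝ := Real.exp (-(c * Δ)) with hv
    have hupos : 0 < u := Real.exp_pos _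
    have hvpos : 0 < v := Real.exp_pos _
    have hexp1 : -(c * Δ) + 1 ≤ v := Real.add_one_le_exp _
    have hexp2 : (c * Δ) + 1 ≤ Real.exp (c * Δ) := Real.add_one_le_exp _
    have hvmul : v * Real.exp (c * Δ) = 1 := by
      rw [hv, ← Real.exp_add]; simp
    constructor
    · -- lower bound
      rw [hga, hga1]
      have h1 : c * f (a+1) ≤ c * Δ :=
        mul_le_mul_of_nonneg_left (hΔlb a ha) hcpos.le
      have h2 : v * (c * Δ) ≤ 1 - v := by nlinarith
      have hfa1 : 0 < f (a+1) := hfpos (a+1) (by linarith)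
      calc c * f (a+1) * (u * v) ≤ c * Δ * (u * v) :=
            mul_le_mul_of_nonneg_right h1 (mul_nonneg hupos.le hvpos.le)
        _ ≤ (1 - v) * u := by nlinarith [mul_le_mul_of_nonneg_left h2 hupos.le]
        _ = u - u * v := by ring
    · -- upper bound
      rw [hga, hga1]
      have h1 : c * Δ ≤ c * f a :=
        mul_le_mul_of_nonneg_left (hΔub a ha) hcpos.le
      have h2 : 1 - v ≤ c * Δ := by linarith
      calc u - u * v = u * (1 - v) := by ring
        _ ≤ u * (c * Δ) := mul_le_mul_of_nonneg_left h2 hupos.le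
        _ ≤ c * f a * u := by nlinarith [mul_le_mul_of_nonneg_left h1 hupos.le]
  -- rewrite in terms of σ
  have hcf : ∀ j : ℕ, c * f j * g j = (1 - α) / 2 * σ j := by
    intro j
    have hj0 : (0:ℝ) ≤ (j:ℝ) := Nat.cast_nonneg j
    have hψj : 0 < ψ j := hψpos _ hj0
    have hψjt : 0 < (ψ (j:ℝ)) ^ t := Real.rpow_pos_of_pos hψj t
    rw [hσ j, hfdef]
    simp only
    rw [Real.rpow_neg hψj.le, hc]
    field_simp
  have key : ∀ j : ℕ, 1 ≤ j →
      (1 - α) / 2 * σ (j+1) ≤ g (j:ℝ) - g (((j+1:ℕ)):ℝ) ∧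
        g (j:ℝ) - g (((j+1:ℕ)):ℝ) ≤ (1 - α) / 2 * σ j := by
    intro j hj
    have hj1 : (1:ℝ) ≤ (j:ℝ) := by exact_mod_cast hj
    have hstep := step (j:ℝ) hj1
    have hcast : ((j:ℝ) + 1) = ((j+1 : ℕ) : ℝ) := by push_cast; ring
    rw [hcast] at hstep
    exact ⟨(hcf (j+1)) ▸ hstep.1, (hcf j) ▸ hstep.2⟩
  have σpos : ∀ j : ℕ, 0 < σ j := by
    intro j
    rw [hσ j]
    have hψj : 0 < ψ j := hψpos _ (Nat.cast_nonneg j)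
    exact div_pos (hgpos _) (mul_pos hM (Real.rpow_pos_of_pos hψj t))
  -- divergence of I
  have hIdiv : Filter.Tendsto (fun n : ℕ => I n) Filter.atTop Filter.atTop := by
    set N' : ℝ := max N 1 with hN'
    have hN'1 : (1:ℝ) ≤ N' := le_max_right _ _
    have hN'N : N ≤ N' := le_max_left _ _
    have hN'pos : (0:ℝ) < N' := by linarith
    set q : ℝ := (1 + p) * t with hq
    have hq1 : q < 1 := hpt
    have hqpos : 0 < q := mul_pos (by linarith) htpos
    have hIlb : ∀ x : ℝ, N' ≤ x →
        A₂ ^ (-t) * ((x ^ (1 - q) - N' ^ (1 - q)) / (1 - q)) ≤ I x := by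
      intro x hx
      have hx0 : (0:ℝ) ≤ x := by linarith
      have hIsplit : I x = I N' + ∫ s in N'..x, f s :=
        (intervalIntegral.integral_add_adjacent_intervals
          (hint 0 N' le_rfl hN'pos.le) (hint N' x hN'pos.le hx0)).symm
      have hIN'nonneg : 0 ≤ I N' :=
        intervalIntegral.integral_nonneg hN'pos.le (fun s hs => (hfpos s hs.1).le)
      have hcomp2 : ∀ s ∈ Icc N' x, A₂ ^ (-t) * s ^ (-q) ≤ f s := by
        intro s hs
        have hs1 : (1:ℝ) ≤ s := le_trans hN'1 hs.1
        have hsN : N ≤ s := le_trans hN'N hs.1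
        have hspos : 0 < s := by linarith
        have hψs : 0 < ψ s := hψpos s (by linarith)
        have hub : ψ s ≤ A₂ * s ^ (1 + p) := (hcomp s hsN).2
        have h1 : (A₂ * s ^ (1 + p)) ^ (-t) ≤ ψ s ^ (-t) :=
          Real.rpow_le_rpow_of_nonpos hψs hub (by linarith)
        have h2 : (A₂ * s ^ (1 + p)) ^ (-t) = A₂ ^ (-t) * s ^ (-q) := by
          rw [Real.mul_rpow hA₂.le (Real.rpow_nonneg hspos.le _),
            ← Real.rpow_mul hspos.le]
          congr 1
          rw [hq]; ring
        rw [← h2]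
        exact h1
      have hcont : ContinuousOn (fun s : ℝ => A₂ ^ (-t) * s ^ (-q)) (Set.uIcc N' x) := by
        apply ContinuousOn.mul continuousOn_const
        apply ContinuousOn.rpow_const continuousOn_id
        intro y hy
        left
        have hy1 : N' ≤ y := by
          rw [Set.uIcc_of_le hx] at hy
          exact hy.1
        simp only [id_eq]
        intro h0
        rw [h0] at hy1
        linarith
      have hint2 : IntervalIntegrable (fun s : ℝ => A₂ ^ (-t) * s ^ (-q))
          MeasureTheory.volume N' x := hcont.intervalIntegrable
      have hmono2 : (∫ s in N'..x, A₂ ^ (-t) * s ^ (-q)) ≤ ∫ s in N'..x, f s :=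
        intervalIntegral.integral_mono_on hx hint2 (hint N' x hN'pos.le hx0) hcomp2
      have hval : (∫ s in N'..x, A₂ ^ (-t) * s ^ (-q))
          = A₂ ^ (-t) * ((x ^ (1 - q) - N' ^ (1 - q)) / (1 - q)) := by
        rw [intervalIntegral.integral_const_mul, integral_rpow (Or.inl (by linarith))]
        rw [show -q + 1 = 1 - q by ring]
      rw [← hval]
      calc (∫ s in N'..x, A₂ ^ (-t) * s ^ (-q)) ≤ ∫ s in N'..x, f s := hmono2
        _ ≤ I N' + ∫ s in N'..x, f s := by linarith
        _ = I x := hIsplit.symm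
    have hLtend : Filter.Tendsto
        (fun x : ℝ => A₂ ^ (-t) * ((x ^ (1 - q) - N' ^ (1 - q)) / (1 - q)))
        Filter.atTop Filter.atTop := by
      apply Filter.Tendsto.const_mul_atTop (Real.rpow_pos_of_pos hA₂ (-t))
      apply Filter.Tendsto.atTop_div_const (by linarith : (0:ℝ) < 1 - q)
      apply Filter.tendsto_atTop_add_const_right
      exact tendsto_rpow_atTop (by linarith)
    have hLtendN : Filter.Tendsto
        (fun n : ℕ => A₂ ^ (-t) * (((n:ℝ) ^ (1 - q) - N' ^ (1 - q)) / (1 - q)))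
        Filter.atTop Filter.atTop := hLtend.comp tendsto_natCast_atTop_atTop
    apply Filter.tendsto_atTop_mono' _ _ hLtendN
    filter_upwards [Filter.eventually_ge_atTop (Nat.ceil N')] with n hn
    exact hIlb n (le_trans (Nat.le_ceil N') (by exact_mod_cast hn))
  -- g(n) → 0
  have hgto : Filter.Tendsto (fun n : ℕ => g n) Filter.atTop (nhds 0) := by
    have h1 : Filter.Tendsto (fun n : ℕ => c * I n) Filter.atTop Filter.atTop :=
      hIdiv.const_mul_atTop hcpos
    have h2 : Filter.Tendsto (fun n : ℕ => -(c * I n)) Filter.atTop Filter.atBot :=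
      Filter.tendsto_neg_atTop_atBot.comp h1
    have h3 := Real.tendsto_exp_atBot.comp h2
    have h4 : (fun n : ℕ => g n) = (Real.exp ∘ fun n : ℕ => -(c * I n)) :=
      funext fun n => hgI n
    rw [h4]
    exact h3
  -- main argument
  intro m hm
  set T : ℝ := ∑' j : ℕ, σ (m + 1 + j) with hT
  -- summability
  have hterm : ∀ k : ℕ, (1 - α) / 2 * σ (m + 1 + k) ≤ g ((m+k : ℕ) : ℝ) - g ((m+k+1 : ℕ) : ℝ) := by
    intro k
    have h := (key (m+k) (le_trans hm (Nat.le_add_right m k))).1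
    rw [show m + 1 + k = m + k + 1 by omega]
    exact h
  have htel : ∀ n : ℕ, ∑ k ∈ Finset.range n,
      (g ((m+k : ℕ) : ℝ) - g ((m+k+1 : ℕ) : ℝ)) = g (m : ℝ) - g ((m+n : ℕ) : ℝ) := by
    intro n
    exact Finset.sum_range_sub' (fun k => g ((m+k : ℕ) : ℝ)) n
  have hsum_le : ∀ n : ℕ, ∑ k ∈ Finset.range n, σ (m + 1 + k) ≤ 2 / (1 - α) * g (m : ℝ) := by
    intro n
    have h1 : (1 - α) / 2 * ∑ k ∈ Finset.range n, σ (m + 1 + k)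
        ≤ g (m : ℝ) - g ((m+n : ℕ) : ℝ) := by
      rw [Finset.mul_sum, ← htel n]
      exact Finset.sum_le_sum (fun k _ => hterm k)
    have h2 : 0 < g ((m+n : ℕ) : ℝ) := hgpos _
    have h3 : (1 - α) / 2 * ∑ k ∈ Finset.range n, σ (m + 1 + k) ≤ g (m : ℝ) := by linarith
    have h4 : 0 < (1 - α) / 2 := by linarith
    rw [div_mul_eq_mul_div, le_div_iff₀ (by linarith : (0:ℝ) < 1 - α)]
    have key2 : ∀ S gm : ℝ, (1 - α) / 2 * S ≤ gm → S * (1 - α) ≤ 2 * gm := by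
      intro S gm h
      nlinarith
    exact key2 _ _ h3
  have hσsum : Summable (fun k : ℕ => σ (m + 1 + k)) :=
    summable_of_sum_range_le (fun k => (σpos _).le) hsum_le
  have hStend : Filter.Tendsto (fun n : ℕ => ∑ k ∈ Finset.range n, σ (m + 1 + k))
      Filter.atTop (nhds T) := hσsum.hasSum.tendsto_sum_nat
  -- upper telescoping: g m ≤ g (m+n+1) + (1-α)/2 * (σ m + S n)
  have hup : ∀ n : ℕ, g (m : ℝ) ≤ g ((m+(n+1) : ℕ) : ℝ)
      + (1 - α) / 2 * (σ m + ∑ k ∈ Finset.range n, σ (m + 1 + k)) := by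
    intro n
    have h1 : ∀ k : ℕ, g ((m+k : ℕ) : ℝ) - g ((m+k+1 : ℕ) : ℝ) ≤ (1 - α) / 2 * σ (m + k) :=
      fun k => (key (m+k) (le_trans hm (Nat.le_add_right m k))).2
    have h2 : g (m : ℝ) - g ((m+(n+1) : ℕ) : ℝ)
        ≤ ∑ k ∈ Finset.range (n+1), (1 - α) / 2 * σ (m + k) := by
      rw [← htel (n+1)]
      exact Finset.sum_le_sum (fun k _ => h1 k)
    have h3 : ∑ k ∈ Finset.range (n+1), (1 - α) / 2 * σ (m + k)
        = (1 - α) / 2 * (σ m + ∑ k ∈ Finset.range n, σ (m + 1 + k)) := by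
      rw [Finset.sum_range_succ']
      have hre : ∑ k ∈ Finset.range n, (1 - α) / 2 * σ (m + (k + 1))
          = ∑ k ∈ Finset.range n, (1 - α) / 2 * σ (m + 1 + k) :=
        Finset.sum_congr rfl (fun k _ => by rw [show m + (k + 1) = m + 1 + k from by omega])
      rw [hre, Nat.add_zero, mul_add, Finset.mul_sum]
      exact add_comm _ _
    linarith [h2, h3.symm.le]
  -- pass to the limit
  have hgm_le : g (m : ℝ) ≤ (1 - α) / 2 * (σ m + T) := by
    have htend : Filter.Tendsto (fun n : ℕ => g ((m+(n+1) : ℕ) : ℝ)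
        + (1 - α) / 2 * (σ m + ∑ k ∈ Finset.range n, σ (m + 1 + k)))
        Filter.atTop (nhds (0 + (1 - α) / 2 * (σ m + T))) := by
      apply Filter.Tendsto.add
      · have hmono' : Filter.Tendsto (fun n : ℕ => m + (n+1)) Filter.atTop Filter.atTop :=
          Filter.tendsto_atTop_mono (fun n => by simp only [id_eq]; omega) Filter.tendsto_id
        exact hgto.comp hmono'
      · exact (Filter.Tendsto.const_add _ hStend).const_mul _
    have := ge_of_tendsto' htend hup
    linarith [this]
  -- final computation
  have hψm : 0 < ψ (m : ℝ) := hψpos _ (Nat.cast_nonneg m)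
  have hψmt : 0 < (ψ (m : ℝ)) ^ t := Real.rpow_pos_of_pos hψm t
  have e1 : (C * (ψ (m : ℝ)) ^ t - 1) * σ m = C / M * g (m : ℝ) - σ m := by
    rw [hσ m]
    field_simp
  have e2 : C / M * g (m : ℝ) ≤ g (m : ℝ) := by
    have h1 : C / M ≤ 1 := (div_le_one hM).mpr hMC
    nlinarith [hgpos (m : ℝ)]
  have hσm := σpos m
  rw [e1]
  nlinarith [hgm_le, e2, hσm]
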